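/- arXiv:1705.01070 — 2 statements merged into one kernel-verified Lean document; each statement's English description precedes it below -/
import Mathlib

section
/- For all λ > 0 and μ > 0, the Perron–Frobenius hazard rate k₁ = ( (3λ+μ) − √((3λ+μ)² − 8λ²) ) / 2 is strictly greater than the renewal-process hazard rate 2λ²/(3λ+μ). -/
open Real

/-- For `λ, μ > 0`, the Perron–Frobenius hazard rate
`k₁ = ((3λ+μ) − √((3λ+μ)² − 8λ²))/2` is strictly greater than the
renewal-process hazard rate `2λ²/(3λ+μ)`. -/
theorem pf_hazard_gt_renewal_hazard (l m : ℝ) (hl : 0 < l) (hm : 0 < m) :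
    2 * l ^ 2 / (3 * l + m)
      < ((3 * l + m) - Real.sqrt ((3 * l + m) ^ 2 - 8 * l ^ 2)) / 2 := by
  set s : ℝ := 3 * l + m with hs_def
  have hs : 0 < s := by positivity
  have ht : (4 * l ^ 2 / s) < s := by
    rw [div_lt_iff₀ hs]
    nlinarith
  have htpos : 0 < s - 4 * l ^ 2 / s := by linarith
  have hst : s * (4 * l ^ 2 / s) = 4 * l ^ 2 := by field_simp
  have key : Real.sqrt (s ^ 2 - 8 * l ^ 2) < s - 4 * l ^ 2 / s := by
    rw [Real.sqrt_lt' htpos]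
    have h2 : 0 < 4 * l ^ 2 / s := by positivity
    nlinarith [sq_nonneg (4 * l ^ 2 / s), hst]
  have h4 : 4 * l ^ 2 / s = 2 * (2 * l ^ 2 / s) := by ring
  linarith [key, h4.symm ▸ key]
end

section
/- Let Q be a real n×n generator matrix (columns sum to zero, off-diagonal entries nonnegative) such that state i has a single outflow: there is exactly one index j₀ ≠ i with Q_{j₀,i} = μ > 0, Q_{l,i} = 0 for all l ∉ {i, j₀}, and Q_{i,i} = −μ. Let P be a steady-state probability vector: Q·P = 0, all P_l > 0, ∑_l P_l = 1. Let μ′ > 0 and let Q′ be the matrix obtained from Q by replacing μ with μ′ (i.e., Q′_{j₀,i} = μ′, Q′_{i,i} = −μ′, all other entries unchanged). Then the vector P′ defined by P′_l = c·P_l for l ≠ i and P′_i = c·(μ/μ′)·P_i, where c = 1/(1 − P_i + (μ/μ′)P_i), is a steady-state probability vector of Q′; consequently, for every l ≠ i the conditional probability P′_l/(1 − P′_i) equals P_l/(1 − P_i). That is, the intensity of the single outflow from state i does not impact the conditional probabilities of all other states given that the system is not in state i. -/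
open Matrix Finset

/-- Lemma 3: in a steady state, if state `i` has a single outflow (to `j₀`,
with intensity `μ`), replacing `μ` by `μ'` yields a steady-state vector whose
components merely rescale `P i` and renormalize; consequently, the conditional
probabilities of all other states given `X ≠ Sᵢ` are unchanged. -/
theorem single_outflow_intensity_irrelevant (n : ℕ)
    (Q : Matrix (Fin n) (Fin n) ℝ)
    (hcol : ∀ c : Fin n, ∑ r, Q r c = 0)
    (hoff : ∀ r c : Fin n, r ≠ c → 0 ≤ Q r c)
    (i j₀ : Fin n) (hj₀ : j₀ ≠ i)
    (μ μ' : ℝ) (hμ : 0 < μ) (hμ' : 0 < μ')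
    (hQj₀i : Q j₀ i = μ) (hQii : Q i i = -μ)
    (hsingle : ∀ l : Fin n, l ≠ i → l ≠ j₀ → Q l i = 0)
    (P : Fin n → ℝ) (hP : Q.mulVec P = 0)
    (hPpos : ∀ l, 0 < P l) (hPsum : ∑ l, P l = 1)
    (Q' : Matrix (Fin n) (Fin n) ℝ)
    (hQ' : ∀ r c : Fin n, Q' r c =
      if c = i then (if r = j₀ then μ' else if r = i then -μ' else Q r c) else Q r c)
    (c : ℝ) (hc : c = 1 / (1 - P i + (μ / μ') * P i))
    (P' : Fin n → ℝ)
    (hP' : ∀ l : Fin n, P' l = if l = i then c * (μ / μ') * P i else c * P l) :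
    Q'.mulVec P' = 0 ∧ (∀ l, 0 < P' l) ∧ (∑ l, P' l = 1) ∧
      ∀ l : Fin n, l ≠ i → P' l / (1 - P' i) = P l / (1 - P i) := by
  have hμ'ne : μ' ≠ 0 := ne_of_gt hμ'
  have hmm : 0 < μ / μ' := div_pos hμ hμ'
  -- erase sum
  have herase : P i + ∑ l ∈ univ.erase i, P l = 1 := by
    rw [Finset.add_sum_erase _ P (mem_univ i)]; exact hPsum
  have herasepos : 0 < ∑ l ∈ univ.erase i, P l :=
    Finset.sum_pos (fun l _ => hPpos l) ⟨j₀, Finset.mem_erase.mpr ⟨hj₀, mem_univ _⟩⟩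
  have h1 : 0 < 1 - P i := by linarith
  have hD : 0 < 1 - P i + μ / μ' * P i := by nlinarith [hPpos i]
  have hc0 : 0 < c := by rw [hc]; positivity
  have hcD : c * (1 - P i + μ / μ' * P i) = 1 := by
    rw [hc, one_div, inv_mul_cancel₀ (ne_of_gt hD)]
  -- key pointwise identity
  have hkey : ∀ r l, Q' r l * P' l = c * (Q r l * P l) := by
    intro r l
    by_cases hl : l = i
    · rw [hl, hP', hQ', if_pos rfl, if_pos rfl]
      by_cases hr : r = j₀
      · rw [hr, if_pos rfl, ← hQj₀i]
        have : Q j₀ i = μ := hQj₀i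
        rw [this]
        field_simp
      · by_cases hri : r = i
        · rw [hri, if_neg (fun h => hj₀ h.symm), if_pos rfl, hQii]
          field_simp
        · rw [if_neg hr, if_neg hri, hsingle r hri hr]
          ring
    · rw [hP', hQ', if_neg hl, if_neg hl]
      ring
  have hmul : Q'.mulVec P' = 0 := by
    funext r
    have hr0 : ∑ l, Q r l * P l = 0 := by
      have := congrFun hP r
      simpa [Matrix.mulVec, dotProduct] using this
    have : ∑ l, Q' r l * P' l = 0 := by
      calc ∑ l, Q' r l * P' l = ∑ l, c * (Q r l * P l) :=
            Finset.sum_congr rfl fun l _ => hkey r l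
        _ = c * ∑ l, Q r l * P l := by rw [Finset.mul_sum]
        _ = 0 := by rw [hr0, mul_zero]
    simpa [Matrix.mulVec, dotProduct] using this
  have hpos : ∀ l, 0 < P' l := by
    intro l
    rw [hP']
    split_ifs
    · exact mul_pos (mul_pos hc0 hmm) (hPpos i)
    · exact mul_pos hc0 (hPpos l)
  have hsum : ∑ l, P' l = 1 := by
    rw [← Finset.add_sum_erase _ P' (mem_univ i), hP' i, if_pos rfl]
    have he : ∑ l ∈ univ.erase i, P' l = c * ∑ l ∈ univ.erase i, P l := by
      rw [Finset.mul_sum]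
      exact Finset.sum_congr rfl fun l hl => by
        rw [hP', if_neg (Finset.mem_erase.mp hl).1]
    rw [he]
    have hE : ∑ l ∈ univ.erase i, P l = 1 - P i := by linarith
    rw [hE]
    linear_combination hcD
  have hPi' : 1 - P' i = c * (1 - P i) := by
    rw [hP', if_pos rfl]
    linear_combination -hcD
  refine ⟨hmul, hpos, hsum, fun l hl => ?_⟩
  rw [hP', if_neg hl, hPi', mul_div_mul_left _ _ (ne_of_gt hc0)]
end
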